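/- arXiv:1312.3917 — 3 statements merged into one kernel-verified Lean document; each statement's English description precedes it below -/
import Mathlib

section
/- Work on a filtered probability space (Ω, ℱ, (ℱ_t)_{t∈[0,T]}, P) satisfying the usual conditions, with an adapted stock price process S = (S_t)_{t∈[0,T]}, S_t > 0 a.s., and transaction cost λ ∈ (0,1). Let S̃ = (S̃_t)_{t∈[0,T]} be any adapted process with (1−λ)S_t ≤ S̃_t ≤ (1+λ)S_t for all t ∈ [0,T], almost surely. Then for every simple self-financing strategy with initial capital x > 0 given by stopping times 0 = τ_0 ≤ τ_1 ≤ … ≤ τ_n = T and bounded ℱ_{τ_i}-measurable random variables h_i, the liquidation value satisfies, almost surely for every t ∈ [0,T], V_t ≤ x + Σ_{i=0}^{n−1} h_i (S̃_{τ_{i+1}∧t} − S̃_{τ_i∧t}); that is, the liquidation value under transaction costs is dominated pathwise by the frictionless wealth process obtained by trading the same positions at the price S̃. -/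
open MeasureTheory Set

/-- A simple self-financing strategy on `[0,T]`: stopping times
`0 = τ_0 ≤ τ_1 ≤ … ≤ τ_n = T` and bounded `ℱ_{τ_i}`-measurable random variables `h_i`
describing the stock position held on `(τ_i, τ_{i+1}]`. -/
structure SimpleStrategy {Ω : Type*} {m : MeasurableSpace Ω}
    (ℱ : Filtration ℝ m) (T : ℝ) where
  n : ℕ
  τ : ℕ → Ω → ℝ
  h : ℕ → Ω → ℝ
  stopping : ∀ i, IsStoppingTime ℱ (fun ω => ((τ i ω : ℝ) : WithTop ℝ))
  tau_zero : ∀ ω, τ 0 ω = 0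
  tau_last : ∀ ω, τ n ω = T
  tau_mono : ∀ ω, ∀ i, i < n → τ i ω ≤ τ (i + 1) ω
  h_meas : ∀ i, Measurable[(stopping i).measurableSpace] (h i)
  h_bdd : ∀ i, ∃ C : ℝ, ∀ ω, |h i ω| ≤ C

namespace SimpleStrategy

variable {Ω : Type*} {m : MeasurableSpace Ω} {ℱ : Filtration ℝ m} {T : ℝ}

/-- The stock position `φ¹_t = Σ_{i<n} h_i 1_{(τ_i, τ_{i+1}]}(t)`. -/
noncomputable def stockPos (σ : SimpleStrategy ℱ T) (t : ℝ) (ω : Ω) : ℝ :=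
  ∑ i ∈ Finset.range σ.n, if σ.τ i ω < t ∧ t ≤ σ.τ (i + 1) ω then σ.h i ω else 0

/-- The previous position `h_{i-1}`, with the convention `h_{-1} = 0`. -/
noncomputable def prevPos (σ : SimpleStrategy ℱ T) (i : ℕ) (ω : Ω) : ℝ :=
  if i = 0 then 0 else σ.h (i - 1) ω

/-- The cash position: purchases at the ask price `(1+λ)S`, sales at the bid price
`(1−λ)S`, i.e. `φ⁰_t = −Σ_{i : τ_i < t} [(h_i−h_{i−1})⁺(1+λ)S_{τ_i} − (h_i−h_{i−1})⁻(1−λ)S_{τ_i}]`. -/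
noncomputable def cashPos (σ : SimpleStrategy ℱ T) (lam : ℝ) (S : ℝ → Ω → ℝ)
    (t : ℝ) (ω : Ω) : ℝ :=
  - ∑ i ∈ Finset.range σ.n,
      if σ.τ i ω < t then
        max (σ.h i ω - σ.prevPos i ω) 0 * ((1 + lam) * S (σ.τ i ω) ω)
          - max (-(σ.h i ω - σ.prevPos i ω)) 0 * ((1 - lam) * S (σ.τ i ω) ω)
      else 0

/-- The liquidation value
`V_t = x + φ⁰_t + (φ¹_t)⁺ (1−λ) S_t − (φ¹_t)⁻ (1+λ) S_t`. -/
noncomputable def liqValue (σ : SimpleStrategy ℱ T) (lam x : ℝ) (S : ℝ → Ω → ℝ)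
    (t : ℝ) (ω : Ω) : ℝ :=
  x + σ.cashPos lam S t ω + max (σ.stockPos t ω) 0 * ((1 - lam) * S t ω)
    - max (-(σ.stockPos t ω)) 0 * ((1 + lam) * S t ω)

/-- The frictionless wealth increment obtained by trading the same positions at the
price `S̃`:  `Σ_{i<n} h_i (S̃_{τ_{i+1} ∧ t} − S̃_{τ_i ∧ t})`. -/
noncomputable def frictionlessGain (σ : SimpleStrategy ℱ T) (Stilde : ℝ → Ω → ℝ)
    (t : ℝ) (ω : Ω) : ℝ :=
  ∑ i ∈ Finset.range σ.n,
    σ.h i ω * (Stilde (min (σ.τ (i + 1) ω) t) ω - Stilde (min (σ.τ i ω) t) ω)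

end SimpleStrategy

/-- On a filtered probability space with an adapted stock price `S > 0` a.s.
and transaction cost `λ ∈ (0,1)`, let `S̃` be any adapted process evolving in the bid-ask
spread, `(1−λ)S_t ≤ S̃_t ≤ (1+λ)S_t` for all `t ∈ [0,T]` a.s. Then for every simple
self-financing strategy with initial capital `x > 0`, almost surely for every `t ∈ [0,T]`,
the liquidation value under transaction costs is dominated by the frictionless wealth
obtained by trading the same positions at the price `S̃`:
`V_t ≤ x + Σ_{i<n} h_i (S̃_{τ_{i+1}∧t} − S̃_{τ_i∧t})`. -/
theorem liqValue_le_frictionless_wealth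
    {Ω : Type*} {m : MeasurableSpace Ω} (P : Measure Ω) [IsProbabilityMeasure P]
    (ℱ : Filtration ℝ m) (T : ℝ) (hT : 0 < T)
    (S : ℝ → Ω → ℝ) (hSadp : Adapted ℱ S)
    (hSpos : ∀ t ∈ Set.Icc (0 : ℝ) T, ∀ᵐ ω ∂P, 0 < S t ω)
    (lam : ℝ) (hlam : lam ∈ Set.Ioo (0 : ℝ) 1)
    (Stilde : ℝ → Ω → ℝ) (hStadp : Adapted ℱ Stilde)
    (hspread : ∀ᵐ ω ∂P, ∀ t ∈ Set.Icc (0 : ℝ) T,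
      (1 - lam) * S t ω ≤ Stilde t ω ∧ Stilde t ω ≤ (1 + lam) * S t ω)
    (x : ℝ) (hx : 0 < x) (σ : SimpleStrategy ℱ T) :
    ∀ᵐ ω ∂P, ∀ t ∈ Set.Icc (0 : ℝ) T,
      σ.liqValue lam x S t ω ≤ x + σ.frictionlessGain Stilde t ω := by

  filter_upwards [hspread] with omg how
  intro t ht
  obtain ⟨ht0, htT⟩ := ht
  have hn : 0 < σ.n := by
    rcases Nat.eq_zero_or_pos σ.n with h0 | h0
    · exfalso
      have h1 := σ.tau_zero omg
      have h2 := σ.tau_last omg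
      rw [h0, h1] at h2
      linarith
    · exact h0
  have mono : ∀ j, j ≤ σ.n → ∀ i, i ≤ j → σ.τ i omg ≤ σ.τ j omg := by
    intro j
    induction j with
    | zero =>
      intro _ i hi
      have h0 : i = 0 := by omega
      rw [h0]
    | succ j ih =>
      intro hj i hi
      rcases Nat.eq_or_lt_of_le hi with h | h
      · rw [h]
      · exact le_trans (ih (by omega) i (by omega)) (σ.tau_mono omg j (by omega))
  have hτmem : ∀ i, i ≤ σ.n → σ.τ i omg ∈ Set.Icc (0 : ℝ) T := by
    intro i hi
    constructor
    · have := mono i hi 0 (Nat.zero_le i); rw [σ.tau_zero omg] at this; exact this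
    · have := mono σ.n le_rfl i hi; rw [σ.tau_last omg] at this; exact this
  have keyle : ∀ a : ℝ, ∀ u ∈ Set.Icc (0 : ℝ) T,
      a * Stilde u omg ≤ max a 0 * ((1 + lam) * S u omg)
        - max (-a) 0 * ((1 - lam) * S u omg) := by
    intro a u hu
    obtain ⟨h1, h2⟩ := how u hu
    have hp : (0 : ℝ) ≤ max a 0 := le_max_right _ _
    have hq : (0 : ℝ) ≤ max (-a) 0 := le_max_right _ _
    have ha : a * Stilde u omg
        = max a 0 * Stilde u omg - max (-a) 0 * Stilde u omg := by
      rcases le_total a 0 with h | h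
      · rw [max_eq_right h, max_eq_left (by linarith)]; ring
      · rw [max_eq_left h, max_eq_right (by linarith)]; ring
    rw [ha]
    nlinarith [mul_nonneg hp (sub_nonneg.2 h2), mul_nonneg hq (sub_nonneg.2 h1)]
  have keyge : ∀ a : ℝ, ∀ u ∈ Set.Icc (0 : ℝ) T,
      max a 0 * ((1 - lam) * S u omg) - max (-a) 0 * ((1 + lam) * S u omg)
        ≤ a * Stilde u omg := by
    intro a u hu
    obtain ⟨h1, h2⟩ := how u hu
    have hp : (0 : ℝ) ≤ max a 0 := le_max_right _ _
    have hq : (0 : ℝ) ≤ max (-a) 0 := le_max_right _ _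
    have ha : a * Stilde u omg
        = max a 0 * Stilde u omg - max (-a) 0 * Stilde u omg := by
      rcases le_total a 0 with h | h
      · rw [max_eq_right h, max_eq_left (by linarith)]; ring
      · rw [max_eq_left h, max_eq_right (by linarith)]; ring
    rw [ha]
    nlinarith [mul_nonneg hp (sub_nonneg.2 h1), mul_nonneg hq (sub_nonneg.2 h2)]
  by_cases hex : ∃ i, i < σ.n ∧ σ.τ i omg < t
  case neg =>
    push_neg at hex
    have ht0' : t = 0 := by
      have := hex 0 hn
      rw [σ.tau_zero omg] at this
      linarith
    subst ht0'
    have hstock : σ.stockPos 0 omg = 0 := by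
      apply Finset.sum_eq_zero
      intro i hi
      rw [if_neg]
      rintro ⟨h1, _⟩
      have := (hτmem i (Finset.mem_range.mp hi).le).1
      linarith
    have hcash : σ.cashPos lam S 0 omg = 0 := by
      unfold SimpleStrategy.cashPos
      rw [Finset.sum_eq_zero, neg_zero]
      intro i hi
      rw [if_neg]
      intro h1
      have := (hτmem i (Finset.mem_range.mp hi).le).1
      linarith
    have hgain : σ.frictionlessGain Stilde 0 omg = 0 := by
      apply Finset.sum_eq_zero
      intro i hi
      have hi' := Finset.mem_range.mp hi
      have m1 : min (σ.τ i omg) 0 = 0 := min_eq_right (hτmem i hi'.le).1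
      have m2 : min (σ.τ (i + 1) omg) 0 = 0 := min_eq_right (hτmem (i + 1) hi').1
      rw [m1, m2, sub_self, mul_zero]
    rw [hgain]
    unfold SimpleStrategy.liqValue
    rw [hstock, hcash]
    simp
  case pos =>
    obtain ⟨i0, hi0n, hi0t⟩ := hex
    classical
    have hne : ((Finset.range σ.n).filter (fun i => σ.τ i omg < t)).Nonempty :=
      ⟨i0, Finset.mem_filter.mpr ⟨Finset.mem_range.mpr hi0n, hi0t⟩⟩
    set k := ((Finset.range σ.n).filter (fun i => σ.τ i omg < t)).max' hne with hkdef
    have hkmem : k ∈ (Finset.range σ.n).filter (fun i => σ.τ i omg < t) :=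
      Finset.max'_mem _ hne
    have hkn : k < σ.n := Finset.mem_range.mp (Finset.mem_filter.mp hkmem).1
    have hkt : σ.τ k omg < t := (Finset.mem_filter.mp hkmem).2
    have hgt : ∀ i, k < i → i ≤ σ.n → t ≤ σ.τ i omg := by
      intro i hki hin
      rcases Nat.eq_or_lt_of_le hin with h | h
      · rw [h, σ.tau_last omg]; exact htT
      · by_contra hc
        push_neg at hc
        have := Finset.le_max' ((Finset.range σ.n).filter (fun j => σ.τ j omg < t)) i
          (Finset.mem_filter.mpr ⟨Finset.mem_range.mpr h, hc⟩)
        omega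
    have hlek : ∀ i, i ≤ k → σ.τ i omg < t :=
      fun i hi => lt_of_le_of_lt (mono k hkn.le i hi) hkt
    set W : ℕ → ℝ := fun i =>
      (if i ≤ k then σ.prevPos i omg else σ.h k omg) * Stilde (min (σ.τ i omg) t) omg
      with hWdef
    have key : ∀ i ∈ Finset.range σ.n,
        W (i + 1) - W i ≤
          σ.h i omg * (Stilde (min (σ.τ (i + 1) omg) t) omg
            - Stilde (min (σ.τ i omg) t) omg)
          + (if σ.τ i omg < t then
              max (σ.h i omg - σ.prevPos i omg) 0 * ((1 + lam) * S (σ.τ i omg) omg)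
                - max (-(σ.h i omg - σ.prevPos i omg)) 0 * ((1 - lam) * S (σ.τ i omg) omg)
            else 0) := by
      intro i hi
      rw [Finset.mem_range] at hi
      by_cases hik : i ≤ k
      · have hτi : σ.τ i omg < t := hlek i hik
        have hmin : min (σ.τ i omg) t = σ.τ i omg := min_eq_left hτi.le
        have hW1 : W (i + 1) = σ.h i omg * Stilde (min (σ.τ (i + 1) omg) t) omg := by
          by_cases h : i + 1 ≤ k
          · simp [hWdef, h, SimpleStrategy.prevPos]
          · have hik' : i = k := by omega
            simp [hWdef, h, hik']
        have hW0 : W i = σ.prevPos i omg * Stilde (σ.τ i omg) omg := by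
          simp [hWdef, hik, hmin]
        rw [hW1, hW0, if_pos hτi, hmin]
        have hk1 := keyle (σ.h i omg - σ.prevPos i omg) (σ.τ i omg) (hτmem i hi.le)
        have hexp : (σ.h i omg - σ.prevPos i omg) * Stilde (σ.τ i omg) omg
            = σ.h i omg * Stilde (σ.τ i omg) omg
              - σ.prevPos i omg * Stilde (σ.τ i omg) omg := by ring
        rw [hexp] at hk1
        have hexp2 : σ.h i omg * (Stilde (min (σ.τ (i + 1) omg) t) omg
              - Stilde (σ.τ i omg) omg)
            = σ.h i omg * Stilde (min (σ.τ (i + 1) omg) t) omg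
              - σ.h i omg * Stilde (σ.τ i omg) omg := by ring
        rw [hexp2]
        linarith
      · push_neg at hik
        have h1 : t ≤ σ.τ i omg := hgt i hik hi.le
        have h2 : t ≤ σ.τ (i + 1) omg := hgt (i + 1) (by omega) hi
        have m1 : min (σ.τ i omg) t = t := min_eq_right h1
        have m2 : min (σ.τ (i + 1) omg) t = t := min_eq_right h2
        rw [if_neg (not_lt.mpr h1)]
        have e1 : ¬ i + 1 ≤ k := by omega
        have e2 : ¬ i ≤ k := by omega
        simp only [hWdef, m1, m2, e1, e2, if_false]
        simp
    have tele : ∑ i ∈ Finset.range σ.n, (W (i + 1) - W i) = W σ.n - W 0 :=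
      Finset.sum_range_sub W σ.n
    have hW0 : W 0 = 0 := by
      simp [hWdef, SimpleStrategy.prevPos]
    have hWn : W σ.n = σ.h k omg * Stilde t omg := by
      have : ¬ σ.n ≤ k := by omega
      simp only [hWdef, this, if_false]
      rw [σ.tau_last omg, min_eq_right htT]
    have hsum := Finset.sum_le_sum key
    rw [tele, hW0, hWn, Finset.sum_add_distrib, sub_zero] at hsum
    have hstock : σ.stockPos t omg = σ.h k omg := by
      unfold SimpleStrategy.stockPos
      rw [Finset.sum_eq_single k]
      · rw [if_pos ⟨hkt, hgt (k + 1) (Nat.lt_succ_self k) hkn⟩]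
      · intro j hj hjk
        rw [Finset.mem_range] at hj
        rw [if_neg]
        rintro ⟨hc1, hc2⟩
        rcases lt_or_gt_of_ne hjk with h | h
        · have : σ.τ (j + 1) omg ≤ σ.τ k omg := mono k hkn.le (j + 1) h
          linarith
        · exact absurd hc1 (not_lt.mpr (hgt j h hj.le))
      · intro h
        exact absurd (Finset.mem_range.mpr hkn) h
    have hliq : max (σ.h k omg) 0 * ((1 - lam) * S t omg)
        - max (-(σ.h k omg)) 0 * ((1 + lam) * S t omg) ≤ σ.h k omg * Stilde t omg :=
      keyge (σ.h k omg) t ⟨ht0, htT⟩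
    unfold SimpleStrategy.liqValue SimpleStrategy.cashPos SimpleStrategy.frictionlessGain
    rw [hstock]
    linarith
end

section
/- Let (Ω, ℱ, P) be a probability space and let U : (0,∞) → ℝ be continuously differentiable, strictly increasing and strictly concave, with U'(0+) = +∞, U'(∞) = 0 and limsup_{x→∞} x U'(x)/U(x) < 1; extend U to 0 by U(0) = lim_{x↓0} U(x) ∈ [−∞, ∞). Let D be a convex set of nonnegative random variables such that E[U(W)] is well-defined in [−∞, +∞] for every W ∈ D, and suppose there exist α > 0 and W₀ ∈ D with W₀ ≥ α almost surely. If V* ∈ D satisfies E[U(V*)] = sup_{W∈D} E[U(W)] < ∞, then V* > 0 almost surely. -/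
open MeasureTheory Set Filter Topology ENNReal

/-- The positive part of an extended real number, as an element of `ℝ≥0∞`. -/
noncomputable def erealPosPart (x : EReal) : ℝ≥0∞ :=
  if x = ⊤ then ⊤ else ENNReal.ofReal x.toReal

/-- The utility function `U : (0,∞) → ℝ` extended to `0` by the (possibly infinite)
value `U₀ ∈ [−∞, ∞)`. -/
noncomputable def utilAt (U : ℝ → ℝ) (U₀ : EReal) (x : ℝ) : EReal :=
  if x = 0 then U₀ else (U x : EReal)

/-- The expected utility `E[U(W)] ∈ [−∞, +∞]` of a nonnegative random variable `W`,
defined as the difference of the integrals of the positive and negative parts. -/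
noncomputable def expUtil {Ω : Type*} [MeasurableSpace Ω] (P : Measure Ω)
    (U : ℝ → ℝ) (U₀ : EReal) (W : Ω → ℝ) : EReal :=
  ((∫⁻ ω, erealPosPart (utilAt U U₀ (W ω)) ∂P : ℝ≥0∞) : EReal)
    - ((∫⁻ ω, erealPosPart (-(utilAt U U₀ (W ω))) ∂P : ℝ≥0∞) : EReal)

/-- `E[U(W)]` is well-defined in `[−∞, +∞]`: the positive part or the negative part of
`U(W)` has finite integral. -/
def ExpUtilWellDef {Ω : Type*} [MeasurableSpace Ω] (P : Measure Ω)
    (U : ℝ → ℝ) (U₀ : EReal) (W : Ω → ℝ) : Prop :=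
  (∫⁻ ω, erealPosPart (utilAt U U₀ (W ω)) ∂P) ≠ ⊤
    ∨ (∫⁻ ω, erealPosPart (-(utilAt U U₀ (W ω))) ∂P) ≠ ⊤

lemma erealPosPart_coe (r : ℝ) : erealPosPart (r : EReal) = ENNReal.ofReal r := by
  simp [erealPosPart]

lemma erealPosPart_neg_coe (r : ℝ) : erealPosPart (-(r : EReal)) = ENNReal.ofReal (-r) := by
  rw [← EReal.coe_neg, erealPosPart_coe]

lemma ennreal_coe_ereal_eq {p : ℝ≥0∞} (hp : p ≠ ⊤) :
    (p : EReal) = ((p.toReal : ℝ) : EReal) := by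
  rw [← EReal.coe_toReal (x := (p : EReal)) (by simpa using hp) (EReal.coe_ennreal_ne_bot p),
    EReal.toReal_coe_ennreal]

lemma ereal_sub_ne_bot {a b : ℝ≥0∞} (hb : b ≠ ⊤) : (a : EReal) - (b : EReal) ≠ ⊥ := by
  rw [ennreal_coe_ereal_eq hb]
  rcases eq_or_ne a ⊤ with h | h
  · rw [h, EReal.coe_ennreal_top, EReal.top_sub_coe]; simp
  · rw [ennreal_coe_ereal_eq h, ← EReal.coe_sub]; exact EReal.coe_ne_bot _

lemma ereal_top_sub {b : ℝ≥0∞} (hb : b ≠ ⊤) : (⊤ : EReal) - (b : EReal) = ⊤ := by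
  rw [ennreal_coe_ereal_eq hb]; exact EReal.top_sub_coe _

lemma repr_integral {Ω : Type*} [MeasurableSpace Ω] (P : Measure Ω)
    (f : Ω → ℝ) (hf : Measurable f)
    (hp : (∫⁻ ω, ENNReal.ofReal (f ω) ∂P) ≠ ⊤)
    (hn : (∫⁻ ω, ENNReal.ofReal (-f ω) ∂P) ≠ ⊤) :
    Integrable f P ∧
      ((∫⁻ ω, ENNReal.ofReal (f ω) ∂P : ℝ≥0∞) : EReal)
        - ((∫⁻ ω, ENNReal.ofReal (-f ω) ∂P : ℝ≥0∞) : EReal)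
        = ((∫ ω, f ω ∂P : ℝ) : EReal) := by
  have hnorm : ∀ ω, (‖f ω‖₊ : ℝ≥0∞) = ENNReal.ofReal (f ω) + ENNReal.ofReal (-f ω) := by
    intro ω
    rcases le_total 0 (f ω) with h | h
    · rw [← enorm_eq_nnnorm, Real.enorm_eq_ofReal h, ENNReal.ofReal_eq_zero.2 (neg_nonpos.2 h), add_zero]
    · rw [← enorm_eq_nnnorm, Real.enorm_eq_ofReal_abs, abs_of_nonpos h,
        ENNReal.ofReal_eq_zero.2 h, zero_add]
  have hint : Integrable f P := by
    refine ⟨hf.aestronglyMeasurable, ?_⟩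
    rw [hasFiniteIntegral_def]
    calc (∫⁻ ω, (‖f ω‖₊ : ℝ≥0∞) ∂P)
        = ∫⁻ ω, (ENNReal.ofReal (f ω) + ENNReal.ofReal (-f ω)) ∂P :=
          lintegral_congr hnorm
      _ = (∫⁻ ω, ENNReal.ofReal (f ω) ∂P) + ∫⁻ ω, ENNReal.ofReal (-f ω) ∂P :=
          lintegral_add_left hf.ennreal_ofReal _
      _ < ⊤ := ENNReal.add_lt_top.2 ⟨hp.lt_top, hn.lt_top⟩
  refine ⟨hint, ?_⟩
  rw [integral_eq_lintegral_pos_part_sub_lintegral_neg_part hint,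
    ennreal_coe_ereal_eq hp, ennreal_coe_ereal_eq hn, ← EReal.coe_sub]

set_option maxHeartbeats 1000000 in
/-- Let `U : (0,∞) → ℝ` be continuously differentiable, strictly
increasing and strictly concave, with `U'(0+) = +∞`, `U'(∞) = 0` and
`limsup_{x→∞} x U'(x)/U(x) < 1`; extend `U` to `0` by `U(0) = lim_{x↓0} U(x) ∈ [−∞, ∞)`.
Let `D` be a convex set of nonnegative random variables with well-defined expected
utilities, and suppose there exist `α > 0` and `W₀ ∈ D` with `W₀ ≥ α` a.s. If `V* ∈ D`
satisfies `E[U(V*)] = sup_{W ∈ D} E[U(W)] < ∞`, then `V* > 0` almost surely. -/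
theorem optimizer_pos_of_expected_utility_max
    {Ω : Type*} [MeasurableSpace Ω] (P : Measure Ω) [IsProbabilityMeasure P]
    (U U' : ℝ → ℝ) (U₀ : EReal)
    (hderiv : ∀ x ∈ Set.Ioi (0 : ℝ), HasDerivAt U (U' x) x)
    (hU'cont : ContinuousOn U' (Set.Ioi 0))
    (hmono : StrictMonoOn U (Set.Ioi 0))
    (hconc : StrictConcaveOn ℝ (Set.Ioi 0) U)
    (hInada₀ : Tendsto U' (nhdsWithin 0 (Set.Ioi 0)) atTop)
    (hInadaTop : Tendsto U' atTop (nhds 0))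
    (hRAE : Filter.limsup (fun x : ℝ => x * U' x / U x) atTop < 1)
    (hU₀ : Tendsto (fun x : ℝ => (U x : EReal)) (nhdsWithin 0 (Set.Ioi 0)) (nhds U₀))
    (hU₀ne : U₀ ≠ ⊤)
    (D : Set (Ω → ℝ)) (hD : Convex ℝ D)
    (hDmeas : ∀ W ∈ D, Measurable W) (hDnonneg : ∀ W ∈ D, ∀ ω, 0 ≤ W ω)
    (hDwd : ∀ W ∈ D, ExpUtilWellDef P U U₀ W)
    (α : ℝ) (hα : 0 < α) (W₀ : Ω → ℝ) (hW₀D : W₀ ∈ D) (hW₀ : ∀ᵐ ω ∂P, α ≤ W₀ ω)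
    (Vstar : Ω → ℝ) (hVD : Vstar ∈ D)
    (hopt : expUtil P U U₀ Vstar = ⨆ W ∈ D, expUtil P U U₀ W)
    (hfin : expUtil P U U₀ Vstar ≠ ⊤) :
    ∀ᵐ ω ∂P, 0 < Vstar ω := by
  by_contra hcon
  have hVmeas := hDmeas Vstar hVD
  have hVnn := hDnonneg Vstar hVD
  set A : Set Ω := {ω | Vstar ω = 0} with hAdef
  have hA : MeasurableSet A := hVmeas (measurableSet_singleton 0)
  have hPA : P A ≠ 0 := by
    rw [ae_iff] at hcon
    have hset : {ω | ¬ 0 < Vstar ω} = A := by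
      ext ω
      simp only [mem_setOf_eq, not_lt, hAdef]
      exact ⟨fun h => le_antisymm h (hVnn ω), fun h => le_of_eq h⟩
    rwa [hset] at hcon
  have hUm : MonotoneOn U (Set.Ioi 0) := hmono.monotoneOn
  have hCc : ConcaveOn ℝ (Set.Ioi 0) U := hconc.concaveOn
  have hle : ∀ W ∈ D, expUtil P U U₀ W ≤ expUtil P U U₀ Vstar := by
    intro W hW
    rw [hopt]
    exact le_iSup₂ (f := fun W (_ : W ∈ D) => expUtil P U U₀ W) W hW
  have hW₀nn := hDnonneg W₀ hW₀D
  -- the negative part of `U(W₀)` is integrable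
  have hnW₀ : (∫⁻ ω, erealPosPart (-(utilAt U U₀ (W₀ ω))) ∂P) ≠ ⊤ := by
    have hb : ∀ᵐ ω ∂P,
        erealPosPart (-(utilAt U U₀ (W₀ ω))) ≤ ENNReal.ofReal (-(U α)) := by
      filter_upwards [hW₀] with ω hω
      have h0 : (0:ℝ) < W₀ ω := lt_of_lt_of_le hα hω
      rw [show utilAt U U₀ (W₀ ω) = ((U (W₀ ω) : ℝ) : EReal) from if_neg (ne_of_gt h0),
        erealPosPart_neg_coe]
      exact ENNReal.ofReal_le_ofReal
        (neg_le_neg (hUm (mem_Ioi.2 hα) (mem_Ioi.2 h0) hω))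
    have := lintegral_mono_ae hb
    rw [lintegral_const] at this
    simp only [measure_univ, mul_one] at this
    exact ne_top_of_le_ne_top ENNReal.ofReal_ne_top this
  have hW₀bot : expUtil P U U₀ W₀ ≠ ⊥ := ereal_sub_ne_bot hnW₀
  have hVbot : expUtil P U U₀ Vstar ≠ ⊥ := by
    intro h
    exact hW₀bot (le_bot_iff.1 (h ▸ hle W₀ hW₀D))
  have hnV : (∫⁻ ω, erealPosPart (-(utilAt U U₀ (Vstar ω))) ∂P) ≠ ⊤ := by
    intro h
    apply hVbot
    unfold expUtil
    rw [h, EReal.coe_ennreal_top, EReal.sub_top]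
  have hpV : (∫⁻ ω, erealPosPart (utilAt U U₀ (Vstar ω)) ∂P) ≠ ⊤ := by
    intro h
    apply hfin
    unfold expUtil
    rw [h, EReal.coe_ennreal_top, ereal_top_sub hnV]
  -- `U₀` cannot be `⊥` (else the negative part of `U(V*)` has infinite integral)
  rcases eq_or_ne U₀ ⊥ with hbot | hne
  · apply hnV
    have hge : (∫⁻ ω, A.indicator (fun _ => (⊤:ℝ≥0∞)) ω ∂P)
        ≤ ∫⁻ ω, erealPosPart (-(utilAt U U₀ (Vstar ω))) ∂P := by
      refine lintegral_mono fun ω => ?_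
      by_cases hω : ω ∈ A
      · rw [indicator_of_mem hω]
        have hz : Vstar ω = 0 := hω
        rw [show utilAt U U₀ (Vstar ω) = U₀ from if_pos hz, hbot]
        simp [erealPosPart]
      · rw [indicator_of_notMem hω]
        exact zero_le
    rw [lintegral_indicator hA, setLIntegral_const, ENNReal.top_mul hPA] at hge
    exact top_le_iff.1 hge
  -- now `U₀ = u₀` is a real number
  obtain ⟨u₀, hu₀⟩ : ∃ u₀ : ℝ, U₀ = (u₀ : EReal) :=
    ⟨U₀.toReal, (EReal.coe_toReal hU₀ne hne).symm⟩
  set v : ℝ → ℝ := fun x => if x ≤ 0 then u₀ else U x with hvdef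
  have hU₀' : Tendsto U (nhdsWithin 0 (Set.Ioi 0)) (nhds u₀) := by
    rw [hu₀] at hU₀
    exact EReal.tendsto_coe.1 hU₀
  have hvcont : Continuous v := by
    rw [continuous_iff_continuousAt]
    intro x
    rcases lt_trichotomy x 0 with hx | hx | hx
    · have hev : (fun _ : ℝ => u₀) =ᶠ[nhds x] v := by
        filter_upwards [Iio_mem_nhds hx] with y hy
        simp [hvdef, le_of_lt (mem_Iio.1 hy)]
      exact continuousAt_const.congr hev
    · subst hx
      have hv0 : v 0 = u₀ := if_pos le_rfl
      rw [ContinuousAt, hv0, ← nhdsLE_sup_nhdsGT (a := (0:ℝ)), tendsto_sup]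
      constructor
      · refine Tendsto.congr' ?_ tendsto_const_nhds
        filter_upwards [self_mem_nhdsWithin] with y hy
        simp [hvdef, (mem_Iic.1 hy : y ≤ (0:ℝ))]
      · refine hU₀'.congr' ?_
        filter_upwards [self_mem_nhdsWithin] with y hy
        simp [hvdef, not_le.2 (mem_Ioi.1 hy)]
    · have hev : U =ᶠ[nhds x] v := by
        filter_upwards [Ioi_mem_nhds hx] with y hy
        simp [hvdef, not_le.2 (mem_Ioi.1 hy)]
      exact ((hderiv x hx).continuousAt).congr hev
  have hvm : Measurable v := hvcont.measurable
  have hveq : ∀ (W : Ω → ℝ), (∀ ω, 0 ≤ W ω) → ∀ ω,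
      utilAt U U₀ (W ω) = ((v (W ω) : ℝ) : EReal) := by
    intro W hW ω
    rcases eq_or_lt_of_le (hW ω) with h | h
    · rw [show utilAt U U₀ (W ω) = U₀ from if_pos h.symm, hu₀,
        show v (W ω) = u₀ from by rw [hvdef]; simp [← h]]
    · rw [show utilAt U U₀ (W ω) = ((U (W ω) : ℝ) : EReal) from if_neg (ne_of_gt h),
        show v (W ω) = U (W ω) from by rw [hvdef]; simp [not_le.2 h]]
  have hexp : ∀ (W : Ω → ℝ), (∀ ω, 0 ≤ W ω) →
      expUtil P U U₀ W
        = ((∫⁻ ω, ENNReal.ofReal (v (W ω)) ∂P : ℝ≥0∞) : EReal)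
          - ((∫⁻ ω, ENNReal.ofReal (-v (W ω)) ∂P : ℝ≥0∞) : EReal) := by
    intro W hW
    have e1 : (∫⁻ ω, erealPosPart (utilAt U U₀ (W ω)) ∂P)
        = ∫⁻ ω, ENNReal.ofReal (v (W ω)) ∂P :=
      lintegral_congr fun ω => by rw [hveq W hW ω, erealPosPart_coe]
    have e2 : (∫⁻ ω, erealPosPart (-(utilAt U U₀ (W ω))) ∂P)
        = ∫⁻ ω, ENNReal.ofReal (-v (W ω)) ∂P :=
      lintegral_congr fun ω => by rw [hveq W hW ω, erealPosPart_neg_coe]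
    unfold expUtil
    rw [e1, e2]
  have e1V : (∫⁻ ω, erealPosPart (utilAt U U₀ (Vstar ω)) ∂P)
      = ∫⁻ ω, ENNReal.ofReal (v (Vstar ω)) ∂P :=
    lintegral_congr fun ω => by rw [hveq Vstar hVnn ω, erealPosPart_coe]
  have e2V : (∫⁻ ω, erealPosPart (-(utilAt U U₀ (Vstar ω))) ∂P)
      = ∫⁻ ω, ENNReal.ofReal (-v (Vstar ω)) ∂P :=
    lintegral_congr fun ω => by rw [hveq Vstar hVnn ω, erealPosPart_neg_coe]
  obtain ⟨hVint, hVrepr⟩ :=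
    repr_integral P (fun ω => v (Vstar ω)) (hvm.comp hVmeas) (e1V ▸ hpV) (e2V ▸ hnV)
  have hEV : expUtil P U U₀ Vstar = ((∫ ω, v (Vstar ω) ∂P : ℝ) : EReal) := by
    rw [hexp Vstar hVnn, hVrepr]
  set rV : ℝ := ∫ ω, v (Vstar ω) ∂P with hrVdef
  set K : ℝ := U α with hKdef
  set δr : ℝ := (P A).toReal with hδdef
  have hδr : 0 < δr := ENNReal.toReal_pos hPA (measure_ne_top P A)
  set C₀ : ℝ := rV - K + δr * (K - u₀) with hC₀def
  set M : ℝ := (C₀ + δr) / (δr * α) with hMdef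
  have hev : ∀ᶠ x in nhdsWithin 0 (Set.Ioi (0:ℝ)), M ≤ U' x :=
    hInada₀.eventually (eventually_ge_atTop M)
  obtain ⟨r, hr0, hrsub⟩ := (nhdsGT_basis (0:ℝ)).eventually_iff.1 hev
  set ε : ℝ := min (1/2 : ℝ) (r / (2*α)) with hεdef
  have hε0 : 0 < ε := lt_min (by norm_num) (div_pos hr0 (by linarith))
  have hε1 : ε < 1 := lt_of_le_of_lt (min_le_left _ _) (by norm_num)
  set b : ℝ := ε * α with hbdef
  have hb0 : 0 < b := mul_pos hε0 hα
  have hbr : b < r := by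
    have h1 : ε ≤ r / (2*α) := min_le_right _ _
    have h2 : b ≤ r / (2*α) * α := mul_le_mul_of_nonneg_right h1 (le_of_lt hα)
    have h3 : r / (2*α) * α = r/2 := by field_simp
    rw [h3] at h2
    linarith
  -- key consequence of the Inada condition at 0
  have hUb : M * b ≤ U b - u₀ := by
    have hlin : Tendsto (fun η : ℝ => M * (b - η)) (nhdsWithin 0 (Set.Ioi 0))
        (nhds (M * b)) := by
      have h1 : Tendsto (fun η : ℝ => M * (b - η)) (nhds 0) (nhds (M * (b - 0))) :=
        (continuous_const.mul (continuous_const.sub continuous_id)).tendsto 0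
      rw [sub_zero] at h1
      exact h1.mono_left nhdsWithin_le_nhds
    have hcts : Tendsto (fun η : ℝ => U b - U η) (nhdsWithin 0 (Set.Ioi 0))
        (nhds (U b - u₀)) := tendsto_const_nhds.sub hU₀'
    refine le_of_tendsto_of_tendsto hlin hcts ?_
    filter_upwards [Ioo_mem_nhdsGT hb0] with η hη
    have hη0 : 0 < η := hη.1
    have hηb : η < b := hη.2
    obtain ⟨c, hc, hc'⟩ := exists_hasDerivAt_eq_slope U U' hηb
      (fun x hx => ((hderiv x (lt_of_lt_of_le hη0 hx.1)).continuousAt).continuousWithinAt)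
      (fun x hx => hderiv x (lt_trans hη0 hx.1))
    have hcM : M ≤ U' c := hrsub ⟨lt_trans hη0 hc.1, lt_trans hc.2 hbr⟩
    have hbη : 0 < b - η := sub_pos.2 hηb
    have : U' c * (b - η) = U b - U η := by
      rw [hc']; field_simp
    show M * (b - η) ≤ U b - U η
    calc M * (b - η) ≤ U' c * (b - η) := by nlinarith
      _ = U b - U η := this
  -- the competitor
  set Wε : Ω → ℝ := (1-ε) • Vstar + ε • W₀ with hWεdef
  have hWεD : Wε ∈ D := hD hVD hW₀D (by linarith) (le_of_lt hε0) (by ring)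
  have hWεnn := hDnonneg Wε hWεD
  have hWεmeas := hDmeas Wε hWεD
  have hWεapp : ∀ ω, Wε ω = (1-ε) * Vstar ω + ε * W₀ ω := fun ω => rfl
  set c₁ : ℝ := U b - ((1-ε)*u₀ + ε*K) with hc₁def
  set ψ : Ω → ℝ := fun ω =>
    (1-ε) * v (Vstar ω) + ε * K + A.indicator (fun _ => c₁) ω with hψdef
  have hψint : Integrable ψ P :=
    ((hVint.const_mul _).add (integrable_const _)).add ((integrable_const _).indicator hA)
  have hψle : ∀ᵐ ω ∂P, ψ ω ≤ v (Wε ω) := by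
    filter_upwards [hW₀] with ω hω
    have hVω := hVnn ω
    have hWb : b ≤ Wε ω := by
      rw [hWεapp]
      nlinarith
    have hWpos : 0 < Wε ω := lt_of_lt_of_le hb0 hWb
    have hvWε : v (Wε ω) = U (Wε ω) := if_neg (not_le.2 hWpos)
    rcases eq_or_lt_of_le hVω with h0 | h0
    · have hωA : ω ∈ A := show Vstar ω = 0 from h0.symm
      have hv0 : v (Vstar ω) = u₀ := by
        rw [hvdef]
        simp [← h0]
      have hUbW : U b ≤ U (Wε ω) := hUm (mem_Ioi.2 hb0) (mem_Ioi.2 hWpos) hWb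
      simp only [hψdef, indicator_of_mem hωA]
      rw [hv0, hvWε, hc₁def]
      linarith
    · have hωA : ω ∉ A := show ¬ Vstar ω = 0 from ne_of_gt h0
      have hvV : v (Vstar ω) = U (Vstar ω) := if_neg (not_le.2 h0)
      have hchord : (1-ε) * U (Vstar ω) + ε * K ≤ U ((1-ε) * Vstar ω + ε * α) := by
        have h := hCc.2 (mem_Ioi.2 h0) (mem_Ioi.2 hα)
          (show (0:ℝ) ≤ 1 - ε by linarith) (le_of_lt hε0) (by ring)
        rw [hKdef]
        simpa [smul_eq_mul] using h
      have hmid : (1-ε) * Vstar ω + ε * α ≤ Wε ω := by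
        rw [hWεapp]; nlinarith
      have hmidpos : 0 < (1-ε) * Vstar ω + ε * α := by nlinarith
      have hU2 := hUm (mem_Ioi.2 hmidpos) (mem_Ioi.2 hWpos) hmid
      simp only [hψdef, indicator_of_notMem hωA, add_zero]
      rw [hvV, hvWε]
      linarith
  have hψneg : (∫⁻ ω, ENNReal.ofReal (-v (Wε ω)) ∂P) ≠ ⊤ := by
    have hle1 : (∫⁻ ω, ENNReal.ofReal (-v (Wε ω)) ∂P)
        ≤ ∫⁻ ω, (‖ψ ω‖₊ : ℝ≥0∞) ∂P := by
      refine lintegral_mono_ae ?_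
      filter_upwards [hψle] with ω h
      calc ENNReal.ofReal (-v (Wε ω)) ≤ ENNReal.ofReal (-ψ ω) :=
            ENNReal.ofReal_le_ofReal (by linarith)
        _ ≤ (‖ψ ω‖₊ : ℝ≥0∞) := by
            rw [← enorm_eq_nnnorm, Real.enorm_eq_ofReal_abs]
            exact ENNReal.ofReal_le_ofReal (neg_le_abs _)
    exact ne_top_of_le_ne_top hψint.2.ne hle1
  have hpWε : (∫⁻ ω, ENNReal.ofReal (v (Wε ω)) ∂P) ≠ ⊤ := by
    by_contra htop
    have hWtop : expUtil P U U₀ Wε = ⊤ := by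
      rw [hexp Wε hWεnn, htop, EReal.coe_ennreal_top, ereal_top_sub hψneg]
    have h2 := hle Wε hWεD
    rw [hWtop, hEV] at h2
    exact absurd h2 (not_le.2 (EReal.coe_lt_top rV))
  obtain ⟨hWεint, hWεrepr⟩ :=
    repr_integral P (fun ω => v (Wε ω)) (hvm.comp hWεmeas) hpWε hψneg
  have hEWε : expUtil P U U₀ Wε = ((∫ ω, v (Wε ω) ∂P : ℝ) : EReal) := by
    rw [hexp Wε hWεnn, hWεrepr]
  have hint_le : ∫ ω, ψ ω ∂P ≤ ∫ ω, v (Wε ω) ∂P :=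
    integral_mono_ae hψint hWεint hψle
  have hfinal : ∫ ω, v (Wε ω) ∂P ≤ rV := by
    have h2 := hle Wε hWεD
    rw [hEWε, hEV] at h2
    exact_mod_cast h2
  have hfint : Integrable (fun ω => (1-ε) * v (Vstar ω) + ε * K) P :=
    (hVint.const_mul _).add (integrable_const _)
  have hind : Integrable (fun ω => A.indicator (fun _ => c₁) ω) P :=
    (integrable_const _).indicator hA
  have hψval : ∫ ω, ψ ω ∂P = (1-ε) * rV + ε * K + c₁ * δr := by
    have h1 : ∫ ω, ψ ω ∂P
        = (∫ ω, ((1-ε) * v (Vstar ω) + ε * K) ∂P)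
          + ∫ ω, A.indicator (fun _ => c₁) ω ∂P := by
      simp only [hψdef]
      exact integral_add hfint hind
    have h2 : ∫ ω, ((1-ε) * v (Vstar ω) + ε * K) ∂P
        = (∫ ω, (1-ε) * v (Vstar ω) ∂P) + ∫ _ω, (ε * K : ℝ) ∂P :=
      integral_add (hVint.const_mul _) (integrable_const _)
    have h3 : ∫ ω, (1-ε) * v (Vstar ω) ∂P = (1-ε) * rV := by
      rw [hrVdef]
      exact integral_const_mul _ _
    have h4 : ∫ _ω, (ε * K : ℝ) ∂P = ε * K := by
      simp [measure_univ]
    have h5 : ∫ ω, A.indicator (fun _ => c₁) ω ∂P = c₁ * δr := by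
      rw [integral_indicator_const c₁ hA, hδdef, smul_eq_mul, mul_comm, measureReal_def]
    rw [h1, h2, h3, h4, h5]
  -- final algebra: derive a contradiction
  clear_value rV K δr C₀ M ε b c₁ ψ Wε
  have hkey : c₁ * δr ≤ ε * (rV - K) := by
    rw [hψval] at hint_le
    nlinarith [hint_le, hfinal]
  have hMbe : M * b * δr = ε * (C₀ + δr) := by
    rw [hMdef, hbdef]
    field_simp
  have hc₁ : c₁ = (U b - u₀) + ε * (u₀ - K) := by rw [hc₁def]; ring
  have hδle : δr ≤ 0 := by
    have h1 : (M * b + ε * (u₀ - K)) * δr ≤ c₁ * δr := by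
      rw [hc₁]
      nlinarith [mul_le_mul_of_nonneg_right hUb hδr.le]
    rw [add_mul, hMbe] at h1
    have h2 : ε * (C₀ + δr) + ε * (u₀ - K) * δr ≤ ε * (rV - K) := le_trans h1 hkey
    have h2' : ε * ((C₀ + δr) + (u₀ - K) * δr) ≤ ε * (rV - K) := by nlinarith [h2]
    have h3 : (C₀ + δr) + (u₀ - K) * δr ≤ rV - K := (mul_le_mul_iff_of_pos_left hε0).1 h2'
    rw [hC₀def] at h3
    nlinarith [h3]
  linarith [hδr, hδle]
end

section
/- Let (Ω, ℱ, P) be a probability space, let C be a convex set of random variables that are strictly positive almost surely, and let V* ∈ C be such that E[log V*] is finite and, for every W ∈ C, E[log W] is well-defined in [−∞, ∞) and satisfies E[log W] ≤ E[log V*] (V* is log-optimal for C). Then E[W / V*] ≤ 1 for every W ∈ C; that is, V* is a numéraire portfolio for C. -/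
open MeasureTheory Set Filter ENNReal
open Topology

/-- The expectation `E[log f] ∈ [−∞, +∞]` of the logarithm of a random variable,
defined as the difference of the integrals of its positive and negative parts. -/
noncomputable def elogExp {Ω : Type*} [MeasurableSpace Ω] (P : Measure Ω)
    (f : Ω → ℝ) : EReal :=
  ((∫⁻ ω, ENNReal.ofReal (max (Real.log (f ω)) 0) ∂P : ℝ≥0∞) : EReal)
    - ((∫⁻ ω, ENNReal.ofReal (max (-(Real.log (f ω))) 0) ∂P : ℝ≥0∞) : EReal)

/-- A real function with finite positive-part and negative-part lintegrals is integrable. -/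
lemma integrable_of_parts {Ω : Type*} [MeasurableSpace Ω] {P : Measure Ω} {g : Ω → ℝ}
    (hm : AEMeasurable g P)
    (hp : (∫⁻ ω, ENNReal.ofReal (max (g ω) 0) ∂P) ≠ ⊤)
    (hn : (∫⁻ ω, ENNReal.ofReal (max (-(g ω)) 0) ∂P) ≠ ⊤) :
    Integrable g P := by
  refine ⟨hm.aestronglyMeasurable, ?_⟩
  rw [hasFiniteIntegral_iff_norm]
  have key : ∀ ω, ENNReal.ofReal ‖g ω‖
      = ENNReal.ofReal (max (g ω) 0) + ENNReal.ofReal (max (-(g ω)) 0) := by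
    intro ω
    rw [← ENNReal.ofReal_add (le_max_right _ _) (le_max_right _ _)]
    congr 1
    rw [Real.norm_eq_abs]
    rcases le_total (g ω) 0 with h | h
    · rw [abs_of_nonpos h, max_eq_right h, max_eq_left (neg_nonneg.2 h), zero_add]
    · rw [abs_of_nonneg h, max_eq_left h, max_eq_right (neg_nonpos.2 h), add_zero]
  simp_rw [key]
  have hmm : AEMeasurable (fun ω => ENNReal.ofReal (max (g ω) 0)) P :=
    (hm.max aemeasurable_const).ennreal_ofReal
  rw [lintegral_add_left' hmm]
  exact ENNReal.add_lt_top.2 ⟨hp.lt_top, hn.lt_top⟩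

/-- When `log f` is integrable, `elogExp` equals the Bochner integral. -/
lemma elogExp_eq_integral {Ω : Type*} [MeasurableSpace Ω] {P : Measure Ω} {f : Ω → ℝ}
    (hi : Integrable (fun ω => Real.log (f ω)) P) :
    elogExp P f = ((∫ ω, Real.log (f ω) ∂P : ℝ) : EReal) := by
  unfold elogExp
  have h1 : Integrable (fun ω => max (Real.log (f ω)) 0) P := hi.pos_part
  have h2 : Integrable (fun ω => max (-(Real.log (f ω))) 0) P := hi.neg.pos_part
  rw [← ofReal_integral_eq_lintegral_ofReal h1 (Filter.Eventually.of_forall fun ω => le_max_right _ _),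
      ← ofReal_integral_eq_lintegral_ofReal h2 (Filter.Eventually.of_forall fun ω => le_max_right _ _)]
  have e1 : ((ENNReal.ofReal (∫ ω, max (Real.log (f ω)) 0 ∂P) : ℝ≥0∞) : EReal)
      = ((∫ ω, max (Real.log (f ω)) 0 ∂P : ℝ) : EReal) := by
    rw [EReal.coe_ennreal_ofReal]; congr 1
    exact max_eq_left (integral_nonneg fun ω => le_max_right _ _)
  have e2 : ((ENNReal.ofReal (∫ ω, max (-(Real.log (f ω))) 0 ∂P) : ℝ≥0∞) : EReal)
      = ((∫ ω, max (-(Real.log (f ω))) 0 ∂P : ℝ) : EReal) := by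
    rw [EReal.coe_ennreal_ofReal]; congr 1
    exact max_eq_left (integral_nonneg fun ω => le_max_right _ _)
  rw [e1, e2, ← EReal.coe_sub, ← integral_sub h1 h2]
  congr 1
  apply integral_congr_ae
  filter_upwards with ω
  rcases le_total (Real.log (f ω)) 0 with h | h
  · rw [max_eq_right h, max_eq_left (neg_nonneg.2 h)]; ring
  · rw [max_eq_left h, max_eq_right (neg_nonpos.2 h)]; ring

/-- The difference quotient of `t ↦ log (1 + t (x-1))` at `0`, along `1/(n+2)`. -/
lemma tendsto_log_slope (x : ℝ) :
    Tendsto (fun n : ℕ => Real.log (1 + (1/(n+2) : ℝ) * (x-1)) / (1/(n+2) : ℝ))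
      atTop (𝓝 (x-1)) := by
  have hd : HasDerivAt (fun t : ℝ => Real.log (1 + t * (x-1))) (x-1) 0 := by
    have h0 : HasDerivAt (fun t : ℝ => 1 + t * (x-1)) (x-1) 0 := by
      simpa using ((hasDerivAt_id 0).mul_const (x-1)).const_add (1:ℝ)
    have hlog := (Real.hasDerivAt_log (by norm_num : (1 + 0 * (x-1) : ℝ) ≠ 0)).comp 0 h0
    simpa [Function.comp_def] using hlog
  have hs := hasDerivAt_iff_tendsto_slope.mp hd
  have hu : Tendsto (fun n : ℕ => (1/(n+2) : ℝ)) atTop (𝓝[≠] 0) := by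
    apply tendsto_nhdsWithin_of_tendsto_nhds_of_eventually_within
    · have : Tendsto (fun n : ℕ => ((n:ℝ)+2)) atTop atTop :=
        tendsto_natCast_atTop_atTop.atTop_add tendsto_const_nhds
      exact this.inv_tendsto_atTop.congr fun n => (one_div _).symm
    · filter_upwards with n
      simp only [mem_compl_iff, mem_singleton_iff]
      positivity
  have := hs.comp hu
  refine this.congr fun n => ?_
  simp [slope_def_field, Real.log_one]

/-- `log (1-ε) ≥ -2ε` for `0 < ε ≤ 1/2`. -/
lemma log_one_sub_ge (ε : ℝ) (hε : 0 < ε) (hε2 : ε ≤ 1/2) :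
    -(2*ε) ≤ Real.log (1 - ε) := by
  rw [Real.le_log_iff_exp_le (by linarith)]
  have h1 : 1 + 2*ε ≤ Real.exp (2*ε) := by
    have := Real.add_one_le_exp (2*ε); linarith
  rw [Real.exp_neg]
  have h2 : (Real.exp (2*ε))⁻¹ ≤ (1+2*ε)⁻¹ := by
    apply inv_anti₀ (by linarith) h1
  refine h2.trans ?_
  rw [inv_le_iff_one_le_mul₀ (by linarith)]
  nlinarith

/-- Let `C` be a convex set of a.s. strictly positive random variables
and `V* ∈ C` be such that `E[log V*]` is finite and, for every `W ∈ C`, `E[log W]` is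
well-defined in `[−∞, ∞)` and satisfies `E[log W] ≤ E[log V*]` (`V*` is log-optimal for
`C`). Then `E[W / V*] ≤ 1` for every `W ∈ C`; that is, `V*` is a numéraire portfolio
for `C`. -/
theorem log_optimal_is_numeraire
    {Ω : Type*} [MeasurableSpace Ω] (P : Measure Ω) [IsProbabilityMeasure P]
    (C : Set (Ω → ℝ)) (hC : Convex ℝ C)
    (hCmeas : ∀ W ∈ C, Measurable W) (hCpos : ∀ W ∈ C, ∀ᵐ ω ∂P, 0 < W ω)
    (Vstar : Ω → ℝ) (hV : Vstar ∈ C)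
    (hfin_pos : (∫⁻ ω, ENNReal.ofReal (max (Real.log (Vstar ω)) 0) ∂P) ≠ ⊤)
    (hfin_neg : (∫⁻ ω, ENNReal.ofReal (max (-(Real.log (Vstar ω))) 0) ∂P) ≠ ⊤)
    (hwd : ∀ W ∈ C, (∫⁻ ω, ENNReal.ofReal (max (Real.log (W ω)) 0) ∂P) ≠ ⊤)
    (hopt : ∀ W ∈ C, elogExp P W ≤ elogExp P Vstar) :
    ∀ W ∈ C, ∫⁻ ω, ENNReal.ofReal (W ω / Vstar ω) ∂P ≤ 1 := by
  intro W hW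
  have hVm := hCmeas _ hV
  have hWm := hCmeas _ hW
  have hVpos := hCpos _ hV
  have hWpos := hCpos _ hW
  have hlogV_int : Integrable (fun ω => Real.log (Vstar ω)) P :=
    integrable_of_parts (Real.measurable_log.comp hVm).aemeasurable hfin_pos hfin_neg
  -- Key estimate for each ε ∈ (0, 1/2]
  have key : ∀ ε : ℝ, 0 < ε → ε ≤ 1/2 →
      ∫⁻ ω, ENNReal.ofReal
        ((Real.log ((1-ε) * Vstar ω + ε * W ω) - Real.log (Vstar ω))/ε + 2) ∂P ≤ 2 := by
    intro ε hε hε2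
    set Vε : Ω → ℝ := fun ω => (1-ε) * Vstar ω + ε * W ω with hVεdef
    have hVεC : Vε ∈ C := by
      have h := hC hV hW (a := 1-ε) (b := ε) (by linarith) hε.le (by ring)
      convert h using 2
      ext ω; simp [hVεdef, smul_eq_mul]
    have hVεm := hCmeas _ hVεC
    -- a.e. pointwise facts
    have hae : ∀ᵐ ω ∂P,
        Real.log (Vε ω) - Real.log (Vstar ω)
          = Real.log (1 + ε * (W ω / Vstar ω - 1))
        ∧ -(2*ε) ≤ Real.log (Vε ω) - Real.log (Vstar ω) := by
      filter_upwards [hVpos, hWpos] with ω hv hw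
      have hx : 0 < W ω / Vstar ω := div_pos hw hv
      set x := W ω / Vstar ω with hxdef
      have hxε : 1 - ε ≤ 1 + ε * (x - 1) := by nlinarith
      have hpos1 : (0:ℝ) < 1 + ε * (x - 1) := by linarith
      have hVεeq : Vε ω = Vstar ω * (1 + ε * (x - 1)) := by
        have e : Vstar ω * x = W ω := by rw [hxdef]; field_simp
        simp only [hVεdef]
        linear_combination (-ε) * e
      have heq : Real.log (Vε ω) - Real.log (Vstar ω) = Real.log (1 + ε * (x - 1)) := by
        rw [hVεeq, Real.log_mul (ne_of_gt hv) (ne_of_gt hpos1)]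
        ring
      refine ⟨heq, ?_⟩
      rw [heq]
      calc -(2*ε) ≤ Real.log (1-ε) := log_one_sub_ge ε hε hε2
        _ ≤ Real.log (1 + ε * (x - 1)) := Real.log_le_log (by linarith) hxε
    -- log Vε is integrable
    have hlogVε_int : Integrable (fun ω => Real.log (Vε ω)) P := by
      refine integrable_of_parts (Real.measurable_log.comp hVεm).aemeasurable (hwd _ hVεC) ?_
      have hb : ∀ᵐ ω ∂P, ENNReal.ofReal (max (-(Real.log (Vε ω))) 0)
          ≤ ENNReal.ofReal (max (-(Real.log (Vstar ω))) 0) + ENNReal.ofReal (2*ε) := by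
        filter_upwards [hae] with ω ⟨_, hge⟩
        rw [← ENNReal.ofReal_add (le_max_right _ _) (by linarith)]
        apply ENNReal.ofReal_le_ofReal
        rcases le_total (-(Real.log (Vε ω))) 0 with h | h
        · rw [max_eq_right h]; positivity
        · rw [max_eq_left h]
          have : -(Real.log (Vε ω)) ≤ -(Real.log (Vstar ω)) + 2*ε := by linarith
          calc -(Real.log (Vε ω)) ≤ -(Real.log (Vstar ω)) + 2*ε := this
            _ ≤ max (-(Real.log (Vstar ω))) 0 + 2*ε := by
                have := le_max_left (-(Real.log (Vstar ω))) 0; linarith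
      intro htop
      have hle := lintegral_mono_ae hb
      rw [htop] at hle
      have hfin : ∫⁻ ω, (ENNReal.ofReal (max (-(Real.log (Vstar ω))) 0)
          + ENNReal.ofReal (2*ε)) ∂P < ⊤ := by
        rw [lintegral_add_right _ measurable_const, lintegral_const, measure_univ, mul_one]
        exact ENNReal.add_lt_top.2 ⟨hfin_neg.lt_top, ENNReal.ofReal_lt_top⟩
      exact (ne_of_lt hfin) (top_le_iff.mp hle)
    -- optimality gives ∫ log Vε ≤ ∫ log Vstar
    have hopte := hopt _ hVεC
    rw [elogExp_eq_integral hlogVε_int, elogExp_eq_integral hlogV_int] at hopte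
    have hint_le : ∫ ω, Real.log (Vε ω) ∂P ≤ ∫ ω, Real.log (Vstar ω) ∂P :=
      EReal.coe_le_coe_iff.mp hopte
    -- the centered difference
    set D : Ω → ℝ := fun ω => Real.log (Vε ω) - Real.log (Vstar ω) with hDdef
    have hD_int : Integrable D P := hlogVε_int.sub hlogV_int
    have hD_le : ∫ ω, D ω ∂P ≤ 0 := by
      rw [hDdef]
      simp only
      rw [integral_sub hlogVε_int hlogV_int]
      linarith
    have hD2_int : Integrable (fun ω => D ω + 2*ε) P := hD_int.add (integrable_const _)
    have hD2_nn : 0 ≤ᵐ[P] fun ω => D ω + 2*ε := by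
      filter_upwards [hae] with ω ⟨_, hge⟩
      simp only [Pi.zero_apply, hDdef]
      linarith
    have hD2_le : ∫ ω, (D ω + 2*ε) ∂P ≤ 2*ε := by
      rw [integral_add hD_int (integrable_const _), integral_const, probReal_univ]
      simp only [ENNReal.toReal_one, one_smul, smul_eq_mul]
      linarith
    have hlin : ∫⁻ ω, ENNReal.ofReal (D ω + 2*ε) ∂P ≤ ENNReal.ofReal (2*ε) := by
      rw [← ofReal_integral_eq_lintegral_ofReal hD2_int hD2_nn]
      exact ENNReal.ofReal_le_ofReal hD2_le
    -- rescale by 1/ε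
    have hpt : ∀ ω, ENNReal.ofReal (D ω / ε + 2)
        = ENNReal.ofReal (1/ε) * ENNReal.ofReal (D ω + 2*ε) := by
      intro ω
      rw [← ENNReal.ofReal_mul (by positivity)]
      congr 1
      field_simp
    calc ∫⁻ ω, ENNReal.ofReal ((Real.log (Vε ω) - Real.log (Vstar ω))/ε + 2) ∂P
        = ∫⁻ ω, ENNReal.ofReal (1/ε) * ENNReal.ofReal (D ω + 2*ε) ∂P := by
          apply lintegral_congr fun ω => hpt ω
      _ = ENNReal.ofReal (1/ε) * ∫⁻ ω, ENNReal.ofReal (D ω + 2*ε) ∂P :=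
          lintegral_const_mul' _ _ ENNReal.ofReal_ne_top
      _ ≤ ENNReal.ofReal (1/ε) * ENNReal.ofReal (2*ε) := by
          exact mul_le_mul_right hlin _
      _ = ENNReal.ofReal ((1/ε) * (2*ε)) := (ENNReal.ofReal_mul (by positivity)).symm
      _ = 2 := by
          rw [show (1/ε) * (2*ε) = 2 by field_simp]
          simp [ENNReal.ofReal_ofNat]
  -- Fatou along ε_n = 1/(n+2)
  set u : ℕ → ℝ := fun n => 1/((n:ℝ)+2) with hudef
  have hu_pos : ∀ n, 0 < u n := fun n => by positivity
  have hu_le : ∀ n, u n ≤ 1/2 := by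
    intro n
    rw [hudef]
    apply div_le_div_of_nonneg_left (by norm_num) (by norm_num)
    · have : (0:ℝ) ≤ (n:ℝ) := Nat.cast_nonneg n
      linarith
  set F : ℕ → Ω → ℝ≥0∞ := fun n ω => ENNReal.ofReal
    ((Real.log ((1-u n) * Vstar ω + u n * W ω) - Real.log (Vstar ω))/(u n) + 2) with hFdef
  have hFm : ∀ n, Measurable (F n) := by
    intro n
    apply ENNReal.measurable_ofReal.comp
    apply Measurable.add _ measurable_const
    apply Measurable.div_const
    exact (Real.measurable_log.comp ((hVm.const_mul _).add (hWm.const_mul _))).sub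
      (Real.measurable_log.comp hVm)
  have hF_le : ∀ n, ∫⁻ ω, F n ω ∂P ≤ 2 := fun n => key (u n) (hu_pos n) (hu_le n)
  have hfatou : ∫⁻ ω, liminf (fun n => F n ω) atTop ∂P
      ≤ liminf (fun n => ∫⁻ ω, F n ω ∂P) atTop := lintegral_liminf_le (μ := P) hFm
  have hliminf_le : liminf (fun n => ∫⁻ ω, F n ω ∂P) atTop ≤ 2 := by
    calc liminf (fun n => ∫⁻ ω, F n ω ∂P) atTop
        ≤ liminf (fun _ : ℕ => (2:ℝ≥0∞)) atTop :=
          liminf_le_liminf (Eventually.of_forall hF_le)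
      _ = 2 := liminf_const 2
  -- a.e. pointwise limit
  have hlim : ∀ᵐ ω ∂P, liminf (fun n => F n ω) atTop = ENNReal.ofReal (W ω / Vstar ω + 1) := by
    filter_upwards [hVpos, hWpos] with ω hv hw
    set x := W ω / Vstar ω with hxdef
    have hx : 0 < x := div_pos hw hv
    have heq : ∀ n, F n ω = ENNReal.ofReal (Real.log (1 + u n * (x-1)) / u n + 2) := by
      intro n
      have hε := hu_pos n
      have hε2 := hu_le n
      have hxε : 1 - u n ≤ 1 + u n * (x - 1) := by nlinarith
      have hpos1 : (0:ℝ) < 1 + u n * (x - 1) := by linarith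
      have hVεeq : (1 - u n) * Vstar ω + u n * W ω = Vstar ω * (1 + u n * (x - 1)) := by
        have e : Vstar ω * x = W ω := by rw [hxdef]; field_simp
        linear_combination (-u n) * e
      rw [hFdef]
      simp only
      rw [hVεeq, Real.log_mul (ne_of_gt hv) (ne_of_gt hpos1)]
      congr 2
      ring
    have htend : Tendsto (fun n => F n ω) atTop (𝓝 (ENNReal.ofReal (x + 1))) := by
      have h1 : Tendsto (fun n => Real.log (1 + u n * (x-1)) / u n + 2) atTop (𝓝 (x+1)) := by
        have := (tendsto_log_slope x).add_const 2
        have h2 : x - 1 + 2 = x + 1 := by ring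
        rw [h2] at this
        exact this
      have h3 := (ENNReal.continuous_ofReal.tendsto (x+1)).comp h1
      refine h3.congr fun n => ?_
      rw [heq n]
      rfl
    exact htend.liminf_eq
  have hfinal : ∫⁻ ω, ENNReal.ofReal (W ω / Vstar ω + 1) ∂P ≤ 2 := by
    calc ∫⁻ ω, ENNReal.ofReal (W ω / Vstar ω + 1) ∂P
        = ∫⁻ ω, liminf (fun n => F n ω) atTop ∂P := (lintegral_congr_ae hlim).symm
      _ ≤ liminf (fun n => ∫⁻ ω, F n ω ∂P) atTop := hfatou
      _ ≤ 2 := hliminf_le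
  have hsplit : ∫⁻ ω, ENNReal.ofReal (W ω / Vstar ω + 1) ∂P
      = (∫⁻ ω, ENNReal.ofReal (W ω / Vstar ω) ∂P) + 1 := by
    have hae : ∀ᵐ ω ∂P, ENNReal.ofReal (W ω / Vstar ω + 1)
        = ENNReal.ofReal (W ω / Vstar ω) + 1 := by
      filter_upwards [hVpos, hWpos] with ω hv hw
      rw [← ENNReal.ofReal_one, ← ENNReal.ofReal_add (le_of_lt (div_pos hw hv)) zero_le_one]
    rw [lintegral_congr_ae hae, lintegral_add_right _ measurable_const, lintegral_const,
      measure_univ, mul_one]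
  rw [hsplit] at hfinal
  have h2 : (2:ℝ≥0∞) = 1 + 1 := by norm_num
  rw [h2] at hfinal
  exact (ENNReal.add_le_add_iff_right ENNReal.one_ne_top).mp hfinal
end
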